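/- Let Φ be an n×d matrix, s₁, s₂ disjoint index sets with δ_{k₁+k₂} ≤ 1/2 where k_i = |s_i|. Then (1 − δ_{k₁} − δ_{k₁+k₂}²/(1 − δ_{k₂})) I_{k₁} ⪯ Φ_{s₁}ᵀ(I − P{Φ_{s₂}})Φ_{s₁} ⪯ (1 + δ_{k₁}) I_{k₁}. -/

import Mathlib

open Matrix Finset

noncomputable section

/-- Number of nonzero entries of a vector. -/
def sparsity {d : ℕ} (x : Fin d → ℝ) : ℕ :=
  (Finset.univ.filter fun i => x i ≠ 0).card

/-- Squared Euclidean norm. -/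
def nsq {k : Type*} [Fintype k] (v : k → ℝ) : ℝ := ∑ i, v i ^ 2

/-- Euclidean (ℓ₂) norm. -/
def l2 {k : Type*} [Fintype k] (v : k → ℝ) : ℝ := Real.sqrt (nsq v)

/-- `Φ` satisfies the order-`t` restricted isometry property with constant `δ`. -/
def satRIP {n d : ℕ} (Φ : Matrix (Fin n) (Fin d) ℝ) (t : ℕ) (δ : ℝ) : Prop :=
  ∀ x : Fin d → ℝ, sparsity x ≤ t →
    (1 - δ) * nsq x ≤ nsq (Φ.mulVec x) ∧ nsq (Φ.mulVec x) ≤ (1 + δ) * nsq x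

/-- The order-`t` RIP constant of `Φ` : the smallest `δ ≥ 0` satisfying the RIP bounds. -/
def ripConst {n d : ℕ} (Φ : Matrix (Fin n) (Fin d) ℝ) (t : ℕ) : ℝ :=
  sInf {δ : ℝ | 0 ≤ δ ∧ satRIP Φ t δ}

/-- The submatrix of `Φ` consisting of the columns indexed by `s`. -/
def cols {n d : ℕ} (Φ : Matrix (Fin n) (Fin d) ℝ) (s : Finset (Fin d)) :
    Matrix (Fin n) {i // i ∈ s} ℝ := Φ.submatrix id (fun i => (i : Fin d))

/-- Orthogonal projection `P{Φ_s} = Φ_s (Φ_sᵀ Φ_s)⁻¹ Φ_sᵀ` onto the column span of `Φ_s`. -/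
def proj {n d : ℕ} (Φ : Matrix (Fin n) (Fin d) ℝ) (s : Finset (Fin d)) :
    Matrix (Fin n) (Fin n) ℝ :=
  cols Φ s * ((cols Φ s)ᵀ * cols Φ s)⁻¹ * (cols Φ s)ᵀ

/-- Least-squares residual `v^{⊥s} = (I - P{Φ_s}) v`. -/
def residVec {n d : ℕ} (Φ : Matrix (Fin n) (Fin d) ℝ) (s : Finset (Fin d)) (y : Fin n → ℝ) :
    Fin n → ℝ := y - (proj Φ s).mulVec y

/-- The `i`-th column of `Φ`. -/
def col {n d : ℕ} (Φ : Matrix (Fin n) (Fin d) ℝ) (i : Fin d) : Fin n → ℝ := fun k => Φ k i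

/-- `x` is a least-squares estimate of `y` supported on `s`:
it is supported on `s` and minimizes `‖y - Φ z‖₂` over all `z` supported on `s`. -/
def leastSq {n d : ℕ} (Φ : Matrix (Fin n) (Fin d) ℝ) (y : Fin n → ℝ) (s : Finset (Fin d))
    (x : Fin d → ℝ) : Prop :=
  (∀ i, i ∉ s → x i = 0) ∧
  ∀ z : Fin d → ℝ, (∀ i, i ∉ s → z i = 0) → nsq (y - Φ.mulVec x) ≤ nsq (y - Φ.mulVec z)

/-- The support of a vector, as a `Finset`. -/
def spt {d : ℕ} (x : Fin d → ℝ) : Finset (Fin d) :=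
  Finset.univ.filter fun i => x i ≠ 0

namespace StmtAux

variable {n d : ℕ}

lemma nsq_nonneg {k : Type*} [Fintype k] (v : k → ℝ) : 0 ≤ nsq v :=
  Finset.sum_nonneg fun _ _ => sq_nonneg _

lemma nsq_eq_zero {k : Type*} [Fintype k] {v : k → ℝ} (h : nsq v = 0) : v = 0 := by
  funext i
  have := (Finset.sum_eq_zero_iff_of_nonneg (fun i _ => sq_nonneg (v i))).1 h i (Finset.mem_univ i)
  exact pow_eq_zero_iff (two_ne_zero) |>.1 this

lemma dot_self_eq_nsq {k : Type*} [Fintype k] (v : k → ℝ) : v ⬝ᵥ v = nsq v := by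
  simp [dotProduct, nsq, sq]

lemma satRIP_exists (Φ : Matrix (Fin n) (Fin d) ℝ) (t : ℕ) :
    ∃ δ, 0 ≤ δ ∧ satRIP Φ t δ := by
  refine ⟨1 + ∑ i, ∑ j, Φ i j ^ 2, by positivity, fun x _ => ?_⟩
  have hC : nsq (Φ.mulVec x) ≤ (∑ i, ∑ j, Φ i j ^ 2) * nsq x := by
    unfold nsq Matrix.mulVec dotProduct
    rw [Finset.sum_mul]
    exact Finset.sum_le_sum fun i _ => Finset.sum_mul_sq_le_sq_mul_sq _ _ _
  have h1 : (0:ℝ) ≤ ∑ i, ∑ j, Φ i j ^ 2 := by positivity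
  constructor
  · nlinarith [nsq_nonneg x, nsq_nonneg (Φ.mulVec x)]
  · nlinarith [nsq_nonneg x]

lemma ripConst_nonneg (Φ : Matrix (Fin n) (Fin d) ℝ) (t : ℕ) : 0 ≤ ripConst Φ t :=
  le_csInf (satRIP_exists Φ t) fun _ hδ => hδ.1

lemma ripConst_satRIP (Φ : Matrix (Fin n) (Fin d) ℝ) (t : ℕ) :
    satRIP Φ t (ripConst Φ t) := by
  intro x hx
  rcases eq_or_lt_of_le (nsq_nonneg x) with hX | hX
  · have hx0 : x = 0 := nsq_eq_zero hX.symm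
    subst hx0
    simp [Matrix.mulVec_zero, nsq]
  · constructor
    · have key : (nsq x - nsq (Φ.mulVec x)) / nsq x ≤ ripConst Φ t := by
        refine le_csInf (satRIP_exists Φ t) fun δ hδ => ?_
        have := (hδ.2 x hx).1
        rw [div_le_iff₀ hX]; nlinarith
      rw [div_le_iff₀ hX] at key; nlinarith
    · have key : (nsq (Φ.mulVec x) - nsq x) / nsq x ≤ ripConst Φ t := by
        refine le_csInf (satRIP_exists Φ t) fun δ hδ => ?_
        have := (hδ.2 x hx).2
        rw [div_le_iff₀ hX]; nlinarith
      rw [div_le_iff₀ hX] at key; nlinarith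

lemma ripConst_mono (Φ : Matrix (Fin n) (Fin d) ℝ) {t t' : ℕ} (h : t ≤ t') :
    ripConst Φ t ≤ ripConst Φ t' := by
  apply csInf_le_csInf ⟨0, fun δ hδ => hδ.1⟩ (satRIP_exists Φ t')
  exact fun δ hδ => ⟨hδ.1, fun x hx => hδ.2 x (hx.trans h)⟩

/-- Extend a vector indexed by a finset to `Fin d`, by zero. -/
def extv {d : ℕ} (s : Finset (Fin d)) (x : {i // i ∈ s} → ℝ) : Fin d → ℝ :=
  fun i => if h : i ∈ s then x ⟨i, h⟩ else 0

lemma extv_not_mem {s : Finset (Fin d)} (x : {i // i ∈ s} → ℝ) {i : Fin d} (h : i ∉ s) :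
    extv s x i = 0 := dif_neg h

lemma mulVec_cols (Φ : Matrix (Fin n) (Fin d) ℝ) (s : Finset (Fin d)) (x : {i // i ∈ s} → ℝ) :
    (cols Φ s).mulVec x = Φ.mulVec (extv s x) := by
  funext j
  unfold cols Matrix.mulVec dotProduct
  rw [← Finset.sum_subset (Finset.subset_univ s)
    (fun i _ hi => by simp [extv_not_mem x hi]),
    ← Finset.sum_attach s (fun i => Φ j i * extv s x i), Finset.univ_eq_attach]
  refine Finset.sum_congr rfl fun i _ => ?_
  simp [extv, i.2]

lemma nsq_extv (s : Finset (Fin d)) (x : {i // i ∈ s} → ℝ) : nsq (extv s x) = nsq x := by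
  unfold nsq
  rw [← Finset.sum_subset (Finset.subset_univ s)
    (fun i _ hi => by simp [extv_not_mem x hi]),
    ← Finset.sum_attach s (fun i => extv s x i ^ 2), Finset.univ_eq_attach]
  refine Finset.sum_congr rfl fun i _ => ?_
  simp [extv, i.2]

lemma sparsity_le {v : Fin d → ℝ} {s : Finset (Fin d)} (h : ∀ i, v i ≠ 0 → i ∈ s) :
    sparsity v ≤ s.card := by
  refine Finset.card_le_card fun i hi => ?_
  exact h i (by simpa using hi)

lemma nsq_add_of_disj {x y : Fin d → ℝ} (h : ∀ i, x i * y i = 0) :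
    nsq (x + y) = nsq x + nsq y := by
  unfold nsq
  rw [← Finset.sum_add_distrib]
  exact Finset.sum_congr rfl fun i _ => by have := h i; simp only [Pi.add_apply]; nlinarith

lemma nsq_sub_of_disj {x y : Fin d → ℝ} (h : ∀ i, x i * y i = 0) :
    nsq (x - y) = nsq x + nsq y := by
  unfold nsq
  rw [← Finset.sum_add_distrib]
  exact Finset.sum_congr rfl fun i _ => by have := h i; simp only [Pi.sub_apply]; nlinarith

lemma nsq_add_sub_four_dot {k : Type*} [Fintype k] (u v : k → ℝ) :
    nsq (u + v) - nsq (u - v) = 4 * (u ⬝ᵥ v) := by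
  unfold nsq dotProduct
  rw [← Finset.sum_sub_distrib, Finset.mul_sum]
  exact Finset.sum_congr rfl fun i _ => by simp only [Pi.add_apply, Pi.sub_apply]; ring

lemma nsq_smul {k : Type*} [Fintype k] (c : ℝ) (v : k → ℝ) : nsq (c • v) = c ^ 2 * nsq v := by
  unfold nsq; rw [Finset.mul_sum]; exact Finset.sum_congr rfl fun i _ => by
    simp [mul_pow]

lemma cross {Φ : Matrix (Fin n) (Fin d) ℝ} {t : ℕ} {δ : ℝ} (h : satRIP Φ t δ)
    {x y : Fin d → ℝ} (hxy : ∀ i, x i * y i = 0)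
    (h1 : sparsity (x + y) ≤ t) (h2 : sparsity (x - y) ≤ t) :
    (Φ.mulVec x) ⬝ᵥ (Φ.mulVec y) ≤ δ / 2 * (nsq x + nsq y) := by
  have e1 := (h _ h1).2
  have e2 := (h _ h2).1
  rw [nsq_add_of_disj hxy] at e1
  rw [nsq_sub_of_disj hxy] at e2
  have key : nsq (Φ.mulVec (x + y)) - nsq (Φ.mulVec (x - y))
      = 4 * (Φ.mulVec x ⬝ᵥ Φ.mulVec y) := by
    rw [Matrix.mulVec_add, Matrix.mulVec_sub]; exact nsq_add_sub_four_dot _ _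
  linarith

/-- If `G ⪰ c I` with `c > 0` (as quadratic forms) and `G` symmetric, then
`wᵀ G⁻¹ w ≤ ‖w‖²/c`, and it is nonnegative. -/
lemma inv_quad_bound {k : Type*} [Fintype k] [DecidableEq k] (G : Matrix k k ℝ)
    (hherm : G.IsHermitian) {c : ℝ} (hc : 0 < c)
    (hlow : ∀ z : k → ℝ, c * nsq z ≤ z ⬝ᵥ G.mulVec z) (w : k → ℝ) :
    0 ≤ w ⬝ᵥ G⁻¹.mulVec w ∧ w ⬝ᵥ G⁻¹.mulVec w ≤ nsq w / c := by
  have hpd : G.PosDef := by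
    refine Matrix.PosDef.of_dotProduct_mulVec_pos hherm fun z hz => ?_
    have h1 : 0 < nsq z := by
      rcases eq_or_lt_of_le (nsq_nonneg z) with h | h
      · exact absurd (funext fun i => by
          have := (Finset.sum_eq_zero_iff_of_nonneg
            (fun i _ => sq_nonneg (z i))).1 h.symm i (Finset.mem_univ i)
          exact pow_eq_zero_iff two_ne_zero |>.1 this) hz
      · exact h
    have := hlow z
    simpa using lt_of_lt_of_le (mul_pos hc h1) this
  have hunit : IsUnit G.det := (Matrix.isUnit_iff_isUnit_det G).mp hpd.isUnit
  set z := G⁻¹.mulVec w with hzdef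
  have hGz : G.mulVec z = w := by
    rw [hzdef, Matrix.mulVec_mulVec, Matrix.mul_nonsing_inv _ hunit, Matrix.one_mulVec]
  set q := w ⬝ᵥ G⁻¹.mulVec w with hq
  have hq1 : q = z ⬝ᵥ G.mulVec z := by
    rw [hq, ← hzdef, hGz, dotProduct_comm]
  have hq0 : 0 ≤ q := le_trans (mul_nonneg hc.le (nsq_nonneg z)) (hq1 ▸ hlow z)
  have hzq : c * nsq z ≤ q := hq1 ▸ hlow z
  have hCS : q ^ 2 ≤ nsq w * nsq z := by
    have h : q = w ⬝ᵥ z := by rw [hq, hzdef]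
    rw [h]
    have := Finset.sum_mul_sq_le_sq_mul_sq Finset.univ w z
    simpa [dotProduct, nsq] using this
  refine ⟨hq0, ?_⟩
  rw [le_div_iff₀ hc]
  rcases eq_or_lt_of_le hq0 with h | h
  · nlinarith [nsq_nonneg w]
  · nlinarith [nsq_nonneg w, nsq_nonneg z]

end StmtAux

open StmtAux

/-- for disjoint `s₁, s₂` with `δ_{k₁+k₂} ≤ 1/2`,
`(1 − δ_{k₁} − δ_{k₁+k₂}²/(1 − δ_{k₂})) I ⪯ Φ_{s₁}ᵀ(I − P{Φ_{s₂}})Φ_{s₁} ⪯ (1 + δ_{k₁}) I`. -/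
theorem stmt5 {n d : ℕ} (Φ : Matrix (Fin n) (Fin d) ℝ) (s₁ s₂ : Finset (Fin d))
    (hdisj : Disjoint s₁ s₂)
    (hδ : ripConst Φ (s₁.card + s₂.card) ≤ 1 / 2) :
    ((cols Φ s₁)ᵀ * (1 - proj Φ s₂) * cols Φ s₁ -
      (1 - ripConst Φ s₁.card -
        ripConst Φ (s₁.card + s₂.card) ^ 2 / (1 - ripConst Φ s₂.card)) •
        (1 : Matrix {i // i ∈ s₁} {i // i ∈ s₁} ℝ)).PosSemidef ∧
    ((1 + ripConst Φ s₁.card) • (1 : Matrix {i // i ∈ s₁} {i // i ∈ s₁} ℝ) -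
      (cols Φ s₁)ᵀ * (1 - proj Φ s₂) * cols Φ s₁).PosSemidef := by
  classical
  set δ := ripConst Φ (s₁.card + s₂.card) with hδdef
  set δ₁ := ripConst Φ s₁.card with hδ₁def
  set δ₂ := ripConst Φ s₂.card with hδ₂def
  have hδ0 : 0 ≤ δ := ripConst_nonneg Φ _
  have hδ₂δ : δ₂ ≤ δ := ripConst_mono Φ (Nat.le_add_left _ _)
  have h12 : (0:ℝ) < 1 - δ₂ := by linarith
  have hR := ripConst_satRIP Φ (s₁.card + s₂.card)
  have hR1 := ripConst_satRIP Φ s₁.card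
  have hR2 := ripConst_satRIP Φ s₂.card
  set A := cols Φ s₁ with hAdef
  set B := cols Φ s₂ with hBdef
  set G := Bᵀ * B with hGdef
  -- quadratic form of G
  have hGquad : ∀ z : {i // i ∈ s₂} → ℝ,
      z ⬝ᵥ G.mulVec z = nsq (Φ.mulVec (extv s₂ z)) := by
    intro z
    rw [hGdef, ← Matrix.mulVec_mulVec, Matrix.dotProduct_mulVec, Matrix.vecMul_transpose,
      dot_self_eq_nsq, hBdef, mulVec_cols]
  have hGlow : ∀ z : {i // i ∈ s₂} → ℝ, (1 - δ₂) * nsq z ≤ z ⬝ᵥ G.mulVec z := by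
    intro z
    rw [hGquad]
    have hs : sparsity (extv s₂ z) ≤ s₂.card :=
      sparsity_le fun i hi => by by_contra h; exact hi (extv_not_mem z h)
    have h := (hR2 _ hs).1
    rwa [nsq_extv] at h
  have hGt : Gᵀ = G := by
    have h := Matrix.isHermitian_conjTranspose_mul_self B
    rwa [Matrix.conjTranspose_eq_transpose_of_trivial] at h
  have hGherm : G.IsHermitian := by
    rw [Matrix.IsHermitian, Matrix.conjTranspose_eq_transpose_of_trivial]; exact hGt
  have hGinvt : (G⁻¹)ᵀ = G⁻¹ := by rw [Matrix.transpose_nonsing_inv, hGt]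
  have hP : proj Φ s₂ = B * G⁻¹ * Bᵀ := rfl
  have hPt : (1 - proj Φ s₂)ᵀ = 1 - proj Φ s₂ := by
    rw [Matrix.transpose_sub, Matrix.transpose_one, hP, Matrix.transpose_mul,
      Matrix.transpose_mul, Matrix.transpose_transpose, hGinvt, Matrix.mul_assoc]
  set M := Aᵀ * (1 - proj Φ s₂) * A with hMdef
  have hMt : Mᵀ = M := by
    rw [hMdef, Matrix.transpose_mul, Matrix.transpose_mul, Matrix.transpose_transpose,
      hPt, Matrix.mul_assoc]
  have hMherm : M.IsHermitian := by
    rw [Matrix.IsHermitian, Matrix.conjTranspose_eq_transpose_of_trivial]; exact hMt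
  -- quadratic form decomposition
  have hquad : ∀ x : {i // i ∈ s₁} → ℝ, x ⬝ᵥ M.mulVec x
      = nsq (A.mulVec x)
        - (Bᵀ.mulVec (A.mulVec x)) ⬝ᵥ G⁻¹.mulVec (Bᵀ.mulVec (A.mulVec x)) := by
    intro x
    calc x ⬝ᵥ M.mulVec x = (A.mulVec x) ⬝ᵥ ((1 - proj Φ s₂).mulVec (A.mulVec x)) := by
          rw [hMdef, ← Matrix.mulVec_mulVec, ← Matrix.mulVec_mulVec,
            Matrix.dotProduct_mulVec, Matrix.vecMul_transpose]
      _ = nsq (A.mulVec x) - (A.mulVec x) ⬝ᵥ (proj Φ s₂).mulVec (A.mulVec x) := by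
          rw [Matrix.sub_mulVec, Matrix.one_mulVec, dotProduct_sub, dot_self_eq_nsq]
      _ = nsq (A.mulVec x)
          - (Bᵀ.mulVec (A.mulVec x)) ⬝ᵥ G⁻¹.mulVec (Bᵀ.mulVec (A.mulVec x)) := by
          rw [hP, ← Matrix.mulVec_mulVec, ← Matrix.mulVec_mulVec,
            Matrix.dotProduct_mulVec, ← Matrix.mulVec_transpose]
  -- pointwise bounds
  have hbounds : ∀ x : {i // i ∈ s₁} → ℝ,
      (1 - δ₁ - δ ^ 2 / (1 - δ₂)) * nsq x ≤ x ⬝ᵥ M.mulVec x ∧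
      x ⬝ᵥ M.mulVec x ≤ (1 + δ₁) * nsq x := by
    intro x
    have hAx : A.mulVec x = Φ.mulVec (extv s₁ x) := mulVec_cols Φ s₁ x
    have hspx : sparsity (extv s₁ x) ≤ s₁.card :=
      sparsity_le fun i hi => by by_contra h; exact hi (extv_not_mem x h)
    have hub : nsq (A.mulVec x) ≤ (1 + δ₁) * nsq x := by
      rw [hAx]
      have h := (hR1 _ hspx).2
      rwa [nsq_extv] at h
    have hlb : (1 - δ₁) * nsq x ≤ nsq (A.mulVec x) := by
      rw [hAx]
      have h := (hR1 _ hspx).1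
      rwa [nsq_extv] at h
    set w := Bᵀ.mulVec (A.mulVec x) with hwdef
    have hinv := inv_quad_bound G hGherm h12 hGlow w
    -- bound nsq w
    have hNX : nsq w ≤ δ ^ 2 * nsq x := by
      rcases eq_or_lt_of_le (nsq_nonneg x) with hX | hX
      · have hx0 : x = 0 := nsq_eq_zero hX.symm
        rw [hwdef, hx0]
        simp [Matrix.mulVec_zero, nsq]
      · -- the cross-term bound, for all scalings
        have hor : ∀ i, extv s₁ x i * extv s₂ w i = 0 := by
          intro i
          by_cases h1 : i ∈ s₂
          · have h2 : i ∉ s₁ := fun h => (Finset.disjoint_left.mp hdisj h) h1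
            rw [extv_not_mem x h2, zero_mul]
          · rw [extv_not_mem w h1, mul_zero]
        have hkey : ∀ t : ℝ, 0 < t →
            nsq w ≤ δ / 2 * (t ^ 2 * nsq x + (t⁻¹) ^ 2 * nsq w) := by
          intro t ht
          have hor' : ∀ i, (t • extv s₁ x) i * (t⁻¹ • extv s₂ w) i = 0 := by
            intro i
            have := hor i
            simp only [Pi.smul_apply, smul_eq_mul]
            linear_combination (t * t⁻¹) * this
          have hsupp : ∀ (a b : ℝ),
              sparsity (a • extv s₁ x + b • extv s₂ w) ≤ s₁.card + s₂.card := by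
            intro a b
            rw [← Finset.card_union_of_disjoint hdisj]
            refine sparsity_le fun i hi => ?_
            by_contra hc
            rw [Finset.mem_union, not_or] at hc
            apply hi
            simp [extv_not_mem x hc.1, extv_not_mem w hc.2]
          have hsp1 : sparsity (t • extv s₁ x + t⁻¹ • extv s₂ w) ≤ s₁.card + s₂.card :=
            hsupp t t⁻¹
          have hsp2 : sparsity (t • extv s₁ x - t⁻¹ • extv s₂ w) ≤ s₁.card + s₂.card := by
            have := hsupp t (-t⁻¹)
            rwa [neg_smul, ← sub_eq_add_neg] at this
          have hc := cross hR hor' hsp1 hsp2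
          rw [Matrix.mulVec_smul, Matrix.mulVec_smul, smul_dotProduct, dotProduct_smul,
            nsq_smul, nsq_smul, nsq_extv, nsq_extv] at hc
          have hdot : (Φ.mulVec (extv s₁ x)) ⬝ᵥ (Φ.mulVec (extv s₂ w)) = nsq w := by
            rw [← dot_self_eq_nsq w]
            nth_rewrite 2 [hwdef]
            rw [Matrix.dotProduct_mulVec w Bᵀ, Matrix.vecMul_transpose,
              dotProduct_comm, hAx, hBdef, mulVec_cols]
          rw [hdot] at hc
          have ht0 : t ≠ 0 := ht.ne'
          have : t • t⁻¹ • nsq w = nsq w := by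
            rw [smul_eq_mul, smul_eq_mul, ← mul_assoc, mul_inv_cancel₀ ht0, one_mul]
          rw [this] at hc
          exact hc
        rcases eq_or_lt_of_le (nsq_nonneg w) with hN | hN
        · rw [← hN]; positivity
        · set N := nsq w with hNdef
          set X := nsq x with hXdef
          set r := Real.sqrt (N / X) with hrdef
          have hrpos : 0 < r := Real.sqrt_pos.mpr (div_pos hN hX)
          have hr2 : r ^ 2 = N / X := Real.sq_sqrt (le_of_lt (div_pos hN hX))
          have hNr : N = r ^ 2 * X := by rw [hr2]; field_simp
          set t := Real.sqrt r with htdef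
          have htpos : 0 < t := Real.sqrt_pos.mpr hrpos
          have ht2 : t ^ 2 = r := Real.sq_sqrt hrpos.le
          have h1 := hkey t htpos
          rw [inv_pow, ht2] at h1
          have h3 : r⁻¹ * N = r * X := by
            rw [hNr]; field_simp
          rw [h3] at h1
          have h4 : N ≤ δ * r * X := by linarith
          have h5 : N * N ≤ (δ * r * X) * (δ * r * X) :=
            mul_le_mul h4 h4 hN.le (by positivity)
          have h6 : (δ * r * X) * (δ * r * X) = δ ^ 2 * N * X := by
            rw [hNr]; ring
          nlinarith
    constructor
    · rw [hquad x]
      have hq2 : w ⬝ᵥ G⁻¹.mulVec w ≤ δ ^ 2 * nsq x / (1 - δ₂) :=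
        le_trans hinv.2 (div_le_div_of_nonneg_right hNX h12.le)
      have heq : (1 - δ₁ - δ ^ 2 / (1 - δ₂)) * nsq x
          = (1 - δ₁) * nsq x - δ ^ 2 * nsq x / (1 - δ₂) := by
        rw [sub_mul, div_mul_eq_mul_div]
      linarith
    · rw [hquad x]
      linarith [hinv.1]
  have hstar : ∀ x : {i // i ∈ s₁} → ℝ, star x = x := fun x => funext fun i => star_trivial _
  constructor
  · refine Matrix.PosSemidef.of_dotProduct_mulVec_nonneg ?_ fun x => ?_
    · rw [Matrix.IsHermitian, Matrix.conjTranspose_eq_transpose_of_trivial,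
        Matrix.transpose_sub, hMt, Matrix.transpose_smul, Matrix.transpose_one]
    rw [hstar x, Matrix.sub_mulVec, dotProduct_sub, Matrix.smul_mulVec,
      Matrix.one_mulVec, dotProduct_smul, dot_self_eq_nsq, smul_eq_mul]
    linarith [(hbounds x).1]
  · refine Matrix.PosSemidef.of_dotProduct_mulVec_nonneg ?_ fun x => ?_
    · rw [Matrix.IsHermitian, Matrix.conjTranspose_eq_transpose_of_trivial,
        Matrix.transpose_sub, hMt, Matrix.transpose_smul, Matrix.transpose_one]
    rw [hstar x, Matrix.sub_mulVec, dotProduct_sub, Matrix.smul_mulVec,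
      Matrix.one_mulVec, dotProduct_smul, dot_self_eq_nsq, smul_eq_mul]
    linarith [(hbounds x).2]
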